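/- arXiv:1111.2417 — 7 statements merged into one kernel-verified Lean document; each statement's English description precedes it below -/
import Mathlib

section
/- For every positive integer k, the set Γ_k = ℤ × ℤ × (1/(2k))ℤ is a subgroup of H₃(ℝ), and it is invariant under α(π/2), α(π) and α(2π), i.e. α(π/2)(Γ_k) = Γ_k, α(π)(Γ_k) = Γ_k and α(2π)(Γ_k) = Γ_k. -/
open Real

/-- The real 3-dimensional Heisenberg group, as `ℝ³` with the multiplication
`(x,y,z)·(x',y',z') = (x+x', y+y', z+z'+ (xy'-x'y)/2)`. -/
@[ext] structure Heis : Type where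
  x : ℝ
  y : ℝ
  z : ℝ

namespace Heis

noncomputable instance : Mul Heis :=
  ⟨fun a b => ⟨a.x + b.x, a.y + b.y, a.z + b.z + (a.x * b.y - b.x * a.y) / 2⟩⟩

instance : One Heis := ⟨⟨0, 0, 0⟩⟩

instance : Inv Heis := ⟨fun a => ⟨-a.x, -a.y, -a.z⟩⟩

@[simp] lemma mul_x (a b : Heis) : (a * b).x = a.x + b.x := rfl
@[simp] lemma mul_y (a b : Heis) : (a * b).y = a.y + b.y := rfl
@[simp] lemma mul_z (a b : Heis) :
    (a * b).z = a.z + b.z + (a.x * b.y - b.x * a.y) / 2 := rfl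
@[simp] lemma one_x : (1 : Heis).x = 0 := rfl
@[simp] lemma one_y : (1 : Heis).y = 0 := rfl
@[simp] lemma one_z : (1 : Heis).z = 0 := rfl
@[simp] lemma inv_x (a : Heis) : a⁻¹.x = -a.x := rfl
@[simp] lemma inv_y (a : Heis) : a⁻¹.y = -a.y := rfl
@[simp] lemma inv_z (a : Heis) : a⁻¹.z = -a.z := rfl

noncomputable instance : Group Heis where
  mul_assoc a b c := by ext <;> simp <;> ring
  one_mul a := by ext <;> simp
  mul_one a := by ext <;> simp
  inv_mul_cancel a := by ext <;> simp

end Heis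

/-- The rotation action `α(t)` of `ℝ` on the Heisenberg group. -/
noncomputable def alphaMap (t : ℝ) (v : Heis) : Heis :=
  ⟨v.x * cos t + v.y * sin t, -v.x * sin t + v.y * cos t, v.z⟩

@[simp] lemma alphaMap_x (t : ℝ) (v : Heis) :
    (alphaMap t v).x = v.x * cos t + v.y * sin t := rfl
@[simp] lemma alphaMap_y (t : ℝ) (v : Heis) :
    (alphaMap t v).y = -v.x * sin t + v.y * cos t := rfl
@[simp] lemma alphaMap_z (t : ℝ) (v : Heis) : (alphaMap t v).z = v.z := rfl

/-- The oscillator group `G = ℝ ⋉_α H₃(ℝ)`. -/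
@[ext] structure Osc : Type where
  t : ℝ
  v : Heis

namespace Osc

noncomputable instance : Mul Osc := ⟨fun a b => ⟨a.t + b.t, a.v * alphaMap a.t b.v⟩⟩
instance : One Osc := ⟨⟨0, 1⟩⟩
noncomputable instance : Inv Osc := ⟨fun a => ⟨-a.t, alphaMap (-a.t) a.v⁻¹⟩⟩

@[simp] lemma mul_t (a b : Osc) : (a * b).t = a.t + b.t := rfl
@[simp] lemma mul_v (a b : Osc) : (a * b).v = a.v * alphaMap a.t b.v := rfl
@[simp] lemma one_t : (1 : Osc).t = 0 := rfl
@[simp] lemma one_v : (1 : Osc).v = 1 := rfl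
@[simp] lemma inv_t (a : Osc) : a⁻¹.t = -a.t := rfl
@[simp] lemma inv_v (a : Osc) : a⁻¹.v = alphaMap (-a.t) a.v⁻¹ := rfl

lemma alphaMap_one (t : ℝ) : alphaMap t (1 : Heis) = 1 := by
  ext <;> simp

lemma alphaMap_mul (t : ℝ) (v w : Heis) :
    alphaMap t (v * w) = alphaMap t v * alphaMap t w := by
  ext
  · simp; ring
  · simp; ring
  · simp
    linear_combination (w.x * v.y - v.x * w.y) * (sin_sq_add_cos_sq t)

lemma alphaMap_add (s t : ℝ) (v : Heis) :
    alphaMap (s + t) v = alphaMap s (alphaMap t v) := by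
  ext <;> simp [cos_add, sin_add] <;> ring

lemma alphaMap_zero (v : Heis) : alphaMap 0 v = v := by
  ext <;> simp

noncomputable instance : Group Osc where
  mul_assoc a b c := by
    refine Osc.ext (by simp; ring) ?_
    simp only [Osc.mul_v, Osc.mul_t, alphaMap_mul, ← alphaMap_add]
    rw [mul_assoc]
  one_mul a := Osc.ext (by simp) (by simp [alphaMap_zero])
  mul_one a := Osc.ext (by simp) (by simp [alphaMap_one])
  inv_mul_cancel a := by
    refine Osc.ext (by simp) ?_
    simp only [Osc.mul_v, Osc.inv_v, Osc.inv_t, Osc.one_v]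
    rw [← alphaMap_mul, inv_mul_cancel, alphaMap_one]

end Osc

/-- `Heis` carries the standard topology of `ℝ³`. -/
noncomputable instance : TopologicalSpace Heis :=
  TopologicalSpace.induced (fun v => (v.x, v.y, v.z)) inferInstance

/-- `Osc` carries the standard topology of `ℝ⁴`. -/
noncomputable instance : TopologicalSpace Osc :=
  TopologicalSpace.induced (fun g => (g.t, g.v.x, g.v.y, g.v.z)) inferInstance

lemma cos_sin_int (n : ℤ) :
    ∃ a b : ℤ, cos (π / 2 * n) = a ∧ sin (π / 2 * n) = b := by
  induction n using Int.induction_on with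
  | zero => exact ⟨1, 0, by simp, by simp⟩
  | succ n ih =>
    obtain ⟨a, b, ha, hb⟩ := ih
    have h : (((n : ℤ) + 1 : ℤ) : ℝ) = ((n : ℤ) : ℝ) + 1 := by push_cast; ring
    refine ⟨-b, a, ?_, ?_⟩
    · rw [h, mul_add, mul_one, cos_add, ha, hb]
      push_cast
      simp
    · rw [h, mul_add, mul_one, sin_add, ha, hb]
      simp
  | pred n ih =>
    obtain ⟨a, b, ha, hb⟩ := ih
    have h : ((-(n : ℤ) - 1 : ℤ) : ℝ) = ((-(n : ℤ) : ℤ) : ℝ) - 1 := by push_cast; ring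
    refine ⟨b, -a, ?_, ?_⟩
    · rw [h, mul_sub, mul_one, cos_sub, ha, hb]
      simp
    · rw [h, mul_sub, mul_one, sin_sub, ha, hb]
      push_cast
      simp

lemma cos_sin_int' (t : ℝ) (h : ∃ j : ℤ, t = π / 2 * j) :
    ∃ a b : ℤ, cos t = a ∧ sin t = b := by
  obtain ⟨j, rfl⟩ := h
  exact cos_sin_int j

/-- The lattice `θℤ ⋉ Γ_k` in the oscillator group, for `θ` an integer multiple of `π/2`. -/
noncomputable def LamTheta (k : ℕ+) (θ : ℝ) (m : ℤ) (hθ : θ = π / 2 * m) : Subgroup Osc where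
  carrier := {g | (∃ n : ℤ, g.t = θ * n) ∧ (∃ a : ℤ, g.v.x = a) ∧ (∃ b : ℤ, g.v.y = b) ∧
    (∃ c : ℤ, g.v.z = (c : ℝ) / (2 * ((k : ℕ) : ℝ)))}
  one_mem' := ⟨⟨0, by simp⟩, ⟨0, by simp⟩, ⟨0, by simp⟩, ⟨0, by simp⟩⟩
  mul_mem' := by
    rintro g h ⟨⟨n₁, hn₁⟩, ⟨a₁, ha₁⟩, ⟨b₁, hb₁⟩, ⟨c₁, hc₁⟩⟩
      ⟨⟨n₂, hn₂⟩, ⟨a₂, ha₂⟩, ⟨b₂, hb₂⟩, ⟨c₂, hc₂⟩⟩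
    obtain ⟨A, B, hA, hB⟩ := cos_sin_int' g.t ⟨m * n₁, by rw [hn₁, hθ]; push_cast; ring⟩
    have hk : ((k : ℕ) : ℝ) ≠ 0 := by
      exact_mod_cast k.ne_zero
    refine ⟨⟨n₁ + n₂, ?_⟩, ⟨a₁ + (a₂ * A + b₂ * B), ?_⟩, ⟨b₁ + (-(a₂ * B) + b₂ * A), ?_⟩,
      ⟨c₁ + c₂ + (k : ℕ) * (a₁ * (-(a₂ * B) + b₂ * A) - (a₂ * A + b₂ * B) * b₁), ?_⟩⟩
    · simp only [Osc.mul_t, hn₁, hn₂]; push_cast; ring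
    · simp only [Osc.mul_v, Heis.mul_x, alphaMap_x, ha₁, ha₂, hb₂, hA, hB]; push_cast; ring
    · simp only [Osc.mul_v, Heis.mul_y, alphaMap_y, hb₁, ha₂, hb₂, hA, hB]; push_cast; ring
    · simp only [Osc.mul_v, Heis.mul_z, alphaMap_x, alphaMap_y, alphaMap_z,
        ha₁, hb₁, ha₂, hb₂, hc₁, hc₂, hA, hB]
      field_simp
      push_cast
      ring
  inv_mem' := by
    rintro g ⟨⟨n₁, hn₁⟩, ⟨a₁, ha₁⟩, ⟨b₁, hb₁⟩, ⟨c₁, hc₁⟩⟩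
    obtain ⟨A, B, hA, hB⟩ := cos_sin_int' g.t ⟨m * n₁, by rw [hn₁, hθ]; push_cast; ring⟩
    refine ⟨⟨-n₁, ?_⟩, ⟨-(a₁ * A) + b₁ * B, ?_⟩, ⟨-(a₁ * B) - b₁ * A, ?_⟩, ⟨-c₁, ?_⟩⟩
    · simp only [Osc.inv_t, hn₁]; push_cast; ring
    · simp only [Osc.inv_v, alphaMap_x, Heis.inv_x, Heis.inv_y, cos_neg, sin_neg,
        ha₁, hb₁, hA, hB]
      push_cast; ring
    · simp only [Osc.inv_v, alphaMap_y, Heis.inv_x, Heis.inv_y, cos_neg, sin_neg,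
        ha₁, hb₁, hA, hB]
      push_cast; ring
    · simp only [Osc.inv_v, alphaMap_z, Heis.inv_z, hc₁]
      push_cast; ring

/-- The lattice `Λ_{k,0} = 2πℤ × Γ_k`. -/
noncomputable def Lam0 (k : ℕ+) : Subgroup Osc :=
  LamTheta k (2 * π) 4 (by push_cast; ring)

/-- The lattice `Λ_{k,π} = πℤ × Γ_k`. -/
noncomputable def LamPi (k : ℕ+) : Subgroup Osc :=
  LamTheta k π 2 (by push_cast; ring)

/-- The lattice `Λ_{k,π/2} = (π/2)ℤ × Γ_k`. -/
noncomputable def LamPi2 (k : ℕ+) : Subgroup Osc :=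
  LamTheta k (π / 2) 1 (by push_cast; ring)

/-- The lattice `Γ_k = ℤ × ℤ × (1/(2k))ℤ` in the Heisenberg group. -/
noncomputable def Gamma (k : ℕ+) : Subgroup Heis where
  carrier := {v | (∃ a : ℤ, v.x = a) ∧ (∃ b : ℤ, v.y = b) ∧
    (∃ c : ℤ, v.z = (c : ℝ) / (2 * ((k : ℕ) : ℝ)))}
  one_mem' := ⟨⟨0, by simp⟩, ⟨0, by simp⟩, ⟨0, by simp⟩⟩
  mul_mem' := by
    rintro v w ⟨⟨a₁, ha₁⟩, ⟨b₁, hb₁⟩, ⟨c₁, hc₁⟩⟩ ⟨⟨a₂, ha₂⟩, ⟨b₂, hb₂⟩, ⟨c₂, hc₂⟩⟩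
    have hk : ((k : ℕ) : ℝ) ≠ 0 := by exact_mod_cast k.ne_zero
    refine ⟨⟨a₁ + a₂, ?_⟩, ⟨b₁ + b₂, ?_⟩, ⟨c₁ + c₂ + (k : ℕ) * (a₁ * b₂ - a₂ * b₁), ?_⟩⟩
    · simp [ha₁, ha₂]
    · simp [hb₁, hb₂]
    · simp only [Heis.mul_z, ha₁, hb₁, ha₂, hb₂, hc₁, hc₂]
      field_simp
      push_cast
      ring
  inv_mem' := by
    rintro v ⟨⟨a₁, ha₁⟩, ⟨b₁, hb₁⟩, ⟨c₁, hc₁⟩⟩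
    refine ⟨⟨-a₁, by simp [ha₁]⟩, ⟨-b₁, by simp [hb₁]⟩, ⟨-c₁, ?_⟩⟩
    simp only [Heis.inv_z, hc₁]
    push_cast
    ring

/-- The subset `pℤ × qℤ × rℤ × sℤ` of the oscillator group. -/
def prodSet (p q r s : ℝ) : Set Osc :=
  {g | (∃ n : ℤ, g.t = p * n) ∧ (∃ n : ℤ, g.v.x = q * n) ∧
    (∃ n : ℤ, g.v.y = r * n) ∧ (∃ n : ℤ, g.v.z = s * n)}


/-- For every positive integer `k`, the set `Γ_k = ℤ × ℤ × (1/(2k))ℤ` is a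
subgroup of `H₃(ℝ)`, invariant under `α(π/2)`, `α(π)` and `α(2π)`. -/
theorem statement1 (k : ℕ+) :
    (∃ S : Subgroup Heis, (S : Set Heis) =
      {v : Heis | (∃ a : ℤ, v.x = a) ∧ (∃ b : ℤ, v.y = b) ∧
        (∃ c : ℤ, v.z = (c : ℝ) / (2 * ((k : ℕ) : ℝ)))}) ∧
    alphaMap (π / 2) '' (Gamma k : Set Heis) = (Gamma k : Set Heis) ∧
    alphaMap π '' (Gamma k : Set Heis) = (Gamma k : Set Heis) ∧
    alphaMap (2 * π) '' (Gamma k : Set Heis) = (Gamma k : Set Heis) := by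
  have hmem : ∀ v : Heis, v ∈ (Gamma k : Set Heis) ↔
      ((∃ a : ℤ, v.x = a) ∧ (∃ b : ℤ, v.y = b) ∧
        (∃ c : ℤ, v.z = (c : ℝ) / (2 * ((k : ℕ) : ℝ)))) := fun _ => Iff.rfl
  have maps : ∀ t : ℝ, ∀ A B : ℤ, cos t = A → sin t = B →
      ∀ v ∈ (Gamma k : Set Heis), alphaMap t v ∈ (Gamma k : Set Heis) := by
    intro t A B hA hB v hv
    rw [hmem] at hv ⊢
    obtain ⟨⟨a, ha⟩, ⟨b, hb⟩, ⟨c, hc⟩⟩ := hv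
    exact ⟨⟨a * A + b * B, by simp only [alphaMap_x, ha, hb, hA, hB]; push_cast; ring⟩,
      ⟨-(a * B) + b * A, by simp only [alphaMap_y, ha, hb, hA, hB]; push_cast; ring⟩, ⟨c, hc⟩⟩
  have img : ∀ t : ℝ, ∀ A B : ℤ, cos t = A → sin t = B →
      alphaMap t '' (Gamma k : Set Heis) = (Gamma k : Set Heis) := by
    intro t A B hA hB
    apply Set.Subset.antisymm
    · rintro _ ⟨v, hv, rfl⟩
      exact maps t A B hA hB v hv
    · intro v hv
      refine ⟨alphaMap (-t) v, maps (-t) A (-B) (by simpa using hA)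
        (by simp [hB]) v hv, ?_⟩
      rw [← Osc.alphaMap_add]
      simp [Osc.alphaMap_zero]
  refine ⟨⟨Gamma k, rfl⟩, img (π / 2) 0 1 (by simp) (by simp),
    img π (-1) 0 (by simp) (by simp), img (2 * π) 1 0 (by simp) (by simp)⟩
end

section
/- For every positive integer k and every i ∈ {0, π, π/2}, the set Λ_{k,i} is a subgroup of the oscillator group G which is discrete (with respect to the standard topology of ℝ⁴) and cocompact, i.e. the quotient space G/Λ_{k,i} is compact. -/
open Real

section Aux

open Set Topology

noncomputable def oscEquiv : Osc ≃ ℝ × ℝ × ℝ × ℝ where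
  toFun g := (g.t, g.v.x, g.v.y, g.v.z)
  invFun p := ⟨p.1, ⟨p.2.1, p.2.2.1, p.2.2.2⟩⟩
  left_inv g := rfl
  right_inv p := rfl

noncomputable def oscHomeo : Osc ≃ₜ ℝ × ℝ × ℝ × ℝ :=
  oscEquiv.toHomeomorphOfIsInducing ⟨rfl⟩

@[simp] lemma oscHomeo_apply (g : Osc) : oscHomeo g = (g.t, g.v.x, g.v.y, g.v.z) := rfl

lemma int_eq_of_abs_lt {a b : ℤ} (h : |(a : ℝ) - b| < 1) : a = b := by
  have h2 : ((a : ℝ) - b) = ((a - b : ℤ) : ℝ) := by push_cast; ring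
  rw [h2, ← Int.cast_abs] at h
  have h3 : |a - b| < 1 := by exact_mod_cast h
  rw [abs_lt] at h3
  omega

set_option maxHeartbeats 2000000 in
lemma discrete_lamTheta (k : ℕ+) (θ : ℝ) (m : ℤ) (hθ : θ = π / 2 * m) (hpos : 0 < θ) :
    DiscreteTopology (LamTheta k θ m hθ) := by
  rw [discreteTopology_iff_singleton_mem_nhds]
  rintro ⟨g, hg⟩
  rw [nhds_subtype, Filter.mem_comap]
  have hk : (0 : ℝ) < ((k : ℕ) : ℝ) := by exact_mod_cast k.pos
  have hk4 : (0:ℝ) < 1/(4*((k:ℕ):ℝ)) := by positivity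
  refine ⟨oscHomeo ⁻¹' (Ioo (g.t - θ/2) (g.t + θ/2) ×ˢ Ioo (g.v.x - 1/2) (g.v.x + 1/2) ×ˢ
      Ioo (g.v.y - 1/2) (g.v.y + 1/2) ×ˢ
      Ioo (g.v.z - 1/(4*((k:ℕ):ℝ))) (g.v.z + 1/(4*((k:ℕ):ℝ)))), ?_, ?_⟩
  · refine IsOpen.mem_nhds ?_ ?_
    · exact (isOpen_Ioo.prod (isOpen_Ioo.prod (isOpen_Ioo.prod isOpen_Ioo))).preimage
        oscHomeo.continuous
    · simp only [Set.mem_preimage, Set.mem_prod, Set.mem_Ioo, oscHomeo_apply]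
      refine ⟨⟨?_, ?_⟩, ⟨?_, ?_⟩, ⟨?_, ?_⟩, ?_, ?_⟩ <;> linarith
  · rintro ⟨h, hh⟩ hmem
    simp only [Set.mem_preimage, Set.mem_prod, Set.mem_Ioo, oscHomeo_apply] at hmem
    obtain ⟨⟨ht1, ht2⟩, ⟨hx1, hx2⟩, ⟨hy1, hy2⟩, hz1, hz2⟩ := hmem
    obtain ⟨⟨n₁, hn₁⟩, ⟨a₁, ha₁⟩, ⟨b₁, hb₁⟩, ⟨c₁, hc₁⟩⟩ := hg
    obtain ⟨⟨n₂, hn₂⟩, ⟨a₂, ha₂⟩, ⟨b₂, hb₂⟩, ⟨c₂, hc₂⟩⟩ := hh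
    rw [hn₁] at ht1 ht2; rw [hn₂] at ht1 ht2
    rw [ha₁] at hx1 hx2; rw [ha₂] at hx1 hx2
    rw [hb₁] at hy1 hy2; rw [hb₂] at hy1 hy2
    rw [hc₁] at hz1 hz2; rw [hc₂] at hz1 hz2
    have hn : n₂ = n₁ := by
      apply int_eq_of_abs_lt; rw [abs_lt]
      constructor <;> nlinarith [ht1, ht2, hpos]
    have ha : a₂ = a₁ := by
      apply int_eq_of_abs_lt; rw [abs_lt]; constructor <;> linarith
    have hb : b₂ = b₁ := by
      apply int_eq_of_abs_lt; rw [abs_lt]; constructor <;> linarith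
    have hc : c₂ = c₁ := by
      have h2K : (0:ℝ) < 2*((k:ℕ):ℝ) := by positivity
      have h4K : (0:ℝ) < 4*((k:ℕ):ℝ) := by positivity
      have heq : (c₂:ℝ)/(2*((k:ℕ):ℝ)) - (c₁:ℝ)/(2*((k:ℕ):ℝ))
          = ((c₂:ℝ)-c₁)/(2*((k:ℕ):ℝ)) := by ring
      have hu : ((c₂:ℝ) - c₁)/(2*((k:ℕ):ℝ)) < 1/(4*((k:ℕ):ℝ)) := by linarith
      have hv : -(1/(4*((k:ℕ):ℝ))) < ((c₂:ℝ) - c₁)/(2*((k:ℕ):ℝ)) := by linarith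
      rw [div_lt_div_iff₀ h2K h4K] at hu
      rw [neg_lt, ← neg_div, div_lt_div_iff₀ h2K h4K] at hv
      have hu2 : ((c₂:ℝ)-c₁) * (4*((k:ℕ):ℝ)) < (1/2) * (4*((k:ℕ):ℝ)) := by linarith
      have hv2 : (-(1/2) : ℝ) * (4*((k:ℕ):ℝ)) < ((c₂:ℝ)-c₁) * (4*((k:ℕ):ℝ)) := by linarith
      have hu3 := (mul_lt_mul_iff_left₀ h4K).mp hu2
      have hv3 := (mul_lt_mul_iff_left₀ h4K).mp hv2
      apply int_eq_of_abs_lt; rw [abs_lt]; constructor <;> linarith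
    have hhg : h = g := by
      ext
      · rw [hn₁, hn₂, hn]
      · rw [ha₁, ha₂, ha]
      · rw [hb₁, hb₂, hb]
      · rw [hc₁, hc₂, hc]
    simp [hhg]

set_option maxHeartbeats 2000000 in
lemma cocompact_lamTheta (k : ℕ+) (θ : ℝ) (m : ℤ) (hθ : θ = π / 2 * m) (hpos : 0 < θ) :
    CompactSpace (Osc ⧸ LamTheta k θ m hθ) := by
  have hk : (0 : ℝ) < ((k : ℕ) : ℝ) := by exact_mod_cast k.pos
  have hK : IsCompact (oscHomeo ⁻¹' (Icc (0:ℝ) θ ×ˢ Icc (-1:ℝ) 1 ×ˢ Icc (-1:ℝ) 1 ×ˢ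
      Icc (0:ℝ) 1) : Set Osc) :=
    oscHomeo.isCompact_preimage.2
      (isCompact_Icc.prod (isCompact_Icc.prod (isCompact_Icc.prod isCompact_Icc)))
  have hsurj : ∀ g : Osc, ∃ x ∈ (oscHomeo ⁻¹' (Icc (0:ℝ) θ ×ˢ Icc (-1:ℝ) 1 ×ˢ Icc (-1:ℝ) 1 ×ˢ
      Icc (0:ℝ) 1) : Set Osc), x⁻¹ * g ∈ LamTheta k θ m hθ := by
    intro g
    have hθne : θ ≠ 0 := ne_of_gt hpos
    have hgt : g.t / θ * θ = g.t := div_mul_cancel₀ _ hθne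
    obtain ⟨n, hn1, hn2⟩ : ∃ n : ℤ, (n:ℝ) ≤ g.t / θ ∧ g.t / θ - n < 1 :=
      ⟨⌊g.t / θ⌋, Int.floor_le _, by
        have := Int.fract_lt_one (g.t / θ); rw [Int.fract] at this; linarith⟩
    obtain ⟨s₀, hs₀⟩ : ∃ s : ℝ, s = g.t - θ * n := ⟨_, rfl⟩
    have hs0 : 0 ≤ s₀ := by
      have := mul_le_mul_of_nonneg_right hn1 hpos.le
      rw [hgt] at this
      rw [hs₀]; linarith [this]
    have hs1 : s₀ ≤ θ := by
      have := mul_le_mul_of_nonneg_right hn2.le hpos.le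
      rw [sub_mul, hgt, one_mul] at this
      rw [hs₀]; linarith [this]
    obtain ⟨a, ha⟩ : ∃ a : ℤ, |g.v.x * cos s₀ - g.v.y * sin s₀ - a| ≤ 1/2 :=
      ⟨round (g.v.x * cos s₀ - g.v.y * sin s₀), abs_sub_round _⟩
    obtain ⟨b, hb⟩ : ∃ b : ℤ, |g.v.x * sin s₀ + g.v.y * cos s₀ - b| ≤ 1/2 :=
      ⟨round (g.v.x * sin s₀ + g.v.y * cos s₀), abs_sub_round _⟩
    rw [abs_le] at ha hb
    obtain ⟨W₁, hW₁⟩ : ∃ W : ℝ, W = (a:ℝ) * cos s₀ + b * sin s₀ := ⟨_, rfl⟩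
    obtain ⟨W₂, hW₂⟩ : ∃ W : ℝ, W = -(a:ℝ) * sin s₀ + b * cos s₀ := ⟨_, rfl⟩
    obtain ⟨Z, hZ⟩ : ∃ Z : ℝ, Z = g.v.z + (W₁ * g.v.y - g.v.x * W₂)/2 := ⟨_, rfl⟩
    obtain ⟨c, hc0, hc1⟩ : ∃ c : ℤ, 0 ≤ 2*((k:ℕ):ℝ)*Z - c ∧ 2*((k:ℕ):ℝ)*Z - c < 1 :=
      ⟨⌊2*((k:ℕ):ℝ)*Z⌋, by
        have h0 := Int.fract_nonneg (2*((k:ℕ):ℝ)*Z)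
        have h1 := Int.fract_lt_one (2*((k:ℕ):ℝ)*Z)
        rw [Int.fract] at h0 h1
        exact ⟨by linarith, by linarith⟩⟩
    refine ⟨g * (⟨θ * n, ⟨(a:ℝ), (b:ℝ), (c:ℝ)/(2*((k:ℕ):ℝ))⟩⟩ : Osc)⁻¹, ?_, ?_⟩
    · -- membership in the compact box
      have hxt : (g * (⟨θ * n, ⟨(a:ℝ), (b:ℝ), (c:ℝ)/(2*((k:ℕ):ℝ))⟩⟩ : Osc)⁻¹).t = s₀ := by
        show g.t + -(θ * n) = s₀
        rw [hs₀]; ring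
      have hxv : (g * (⟨θ * n, ⟨(a:ℝ), (b:ℝ), (c:ℝ)/(2*((k:ℕ):ℝ))⟩⟩ : Osc)⁻¹).v
          = g.v * alphaMap s₀ (⟨(a:ℝ), (b:ℝ), (c:ℝ)/(2*((k:ℕ):ℝ))⟩ : Heis)⁻¹ := by
        show g.v * alphaMap g.t (alphaMap (-(θ * n))
          (⟨(a:ℝ), (b:ℝ), (c:ℝ)/(2*((k:ℕ):ℝ))⟩ : Heis)⁻¹) = _
        rw [← Osc.alphaMap_add, show g.t + -(θ * (n:ℝ)) = s₀ from by rw [hs₀]; ring]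
      have hxx : (g.v * alphaMap s₀ (⟨(a:ℝ), (b:ℝ), (c:ℝ)/(2*((k:ℕ):ℝ))⟩ : Heis)⁻¹).x
          = g.v.x - W₁ := by
        simp only [Heis.mul_x, alphaMap_x, Heis.inv_x, Heis.inv_y]
        rw [hW₁]; ring
      have hxy : (g.v * alphaMap s₀ (⟨(a:ℝ), (b:ℝ), (c:ℝ)/(2*((k:ℕ):ℝ))⟩ : Heis)⁻¹).y
          = g.v.y - W₂ := by
        simp only [Heis.mul_y, alphaMap_y, Heis.inv_x, Heis.inv_y]
        rw [hW₂]; ring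
      have hxz : (g.v * alphaMap s₀ (⟨(a:ℝ), (b:ℝ), (c:ℝ)/(2*((k:ℕ):ℝ))⟩ : Heis)⁻¹).z
          = Z - (c:ℝ)/(2*((k:ℕ):ℝ)) := by
        simp only [Heis.mul_z, alphaMap_x, alphaMap_y, alphaMap_z, Heis.inv_x, Heis.inv_y,
          Heis.inv_z]
        rw [hZ, hW₁, hW₂]; ring
      have hpyth : (g.v.x - W₁)^2 + (g.v.y - W₂)^2
          = (g.v.x * cos s₀ - g.v.y * sin s₀ - a)^2
            + (g.v.x * sin s₀ + g.v.y * cos s₀ - b)^2 := by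
        rw [hW₁, hW₂]
        linear_combination ((a:ℝ)^2 + (b:ℝ)^2 - g.v.x^2 - g.v.y^2) * sin_sq_add_cos_sq s₀
      have h1 : (g.v.x * cos s₀ - g.v.y * sin s₀ - a)^2 ≤ (1/2:ℝ)^2 :=
        sq_le_sq' (by linarith [ha.1]) ha.2
      have h2 : (g.v.x * sin s₀ + g.v.y * cos s₀ - b)^2 ≤ (1/2:ℝ)^2 :=
        sq_le_sq' (by linarith [hb.1]) hb.2
      have hsum : (g.v.x - W₁)^2 + (g.v.y - W₂)^2 ≤ 1 := by
        rw [hpyth]; norm_num at h1 h2 ⊢; linarith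
      have hbx : (g.v.x - W₁)^2 ≤ 1 := by linarith [sq_nonneg (g.v.y - W₂)]
      have hby : (g.v.y - W₂)^2 ≤ 1 := by linarith [sq_nonneg (g.v.x - W₁)]
      have hzrw : Z - (c:ℝ)/(2*((k:ℕ):ℝ)) = (2*((k:ℕ):ℝ)*Z - c)/(2*((k:ℕ):ℝ)) := by
        field_simp
      have hk1 : (1:ℝ) ≤ ((k:ℕ):ℝ) := by exact_mod_cast k.one_le
      simp only [Set.mem_preimage, oscHomeo_apply, Set.mem_prod, Set.mem_Icc]
      rw [hxt, hxv, hxx, hxy, hxz, hzrw]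
      refine ⟨⟨hs0, hs1⟩, ⟨?_, ?_⟩, ⟨?_, ?_⟩, ?_, ?_⟩
      · nlinarith [hbx, sq_nonneg (g.v.x - W₁ + 1)]
      · nlinarith [hbx, sq_nonneg (g.v.x - W₁ - 1)]
      · nlinarith [hby, sq_nonneg (g.v.y - W₂ + 1)]
      · nlinarith [hby, sq_nonneg (g.v.y - W₂ - 1)]
      · exact div_nonneg hc0 (by positivity)
      · rw [div_le_one (by positivity)]; linarith
    · have hll : (g * (⟨θ * n, ⟨(a:ℝ), (b:ℝ), (c:ℝ)/(2*((k:ℕ):ℝ))⟩⟩ : Osc)⁻¹)⁻¹ * g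
          = (⟨θ * n, ⟨(a:ℝ), (b:ℝ), (c:ℝ)/(2*((k:ℕ):ℝ))⟩⟩ : Osc) := by group
      rw [hll]
      exact ⟨⟨n, rfl⟩, ⟨a, rfl⟩, ⟨b, rfl⟩, ⟨c, rfl⟩⟩
  have himg : (QuotientGroup.mk '' (oscHomeo ⁻¹' (Icc (0:ℝ) θ ×ˢ Icc (-1:ℝ) 1 ×ˢ
      Icc (-1:ℝ) 1 ×ˢ Icc (0:ℝ) 1)) : Set (Osc ⧸ LamTheta k θ m hθ)) = Set.univ := by
    ext q
    simp only [Set.mem_univ, iff_true]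
    obtain ⟨g, rfl⟩ := QuotientGroup.mk_surjective q
    obtain ⟨x, hx, hl⟩ := hsurj g
    exact ⟨x, hx, QuotientGroup.eq.mpr hl⟩
  have hcont : Continuous (QuotientGroup.mk : Osc → Osc ⧸ LamTheta k θ m hθ) :=
    continuous_quotient_mk'
  exact isCompact_univ_iff.mp (himg ▸ hK.image hcont)

end Aux

set_option maxHeartbeats 2000000 in
/-- For every positive integer `k` and every `i ∈ {0, π, π/2}`, the set
`Λ_{k,i}` is a subgroup of the oscillator group `G` which is discrete (w.r.t. the standard
topology of `ℝ⁴`) and cocompact. -/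
theorem statement2 (k : ℕ+) :
    ((Lam0 k : Set Osc) = {g : Osc | (∃ n : ℤ, g.t = 2 * π * n) ∧ (∃ a : ℤ, g.v.x = a) ∧
      (∃ b : ℤ, g.v.y = b) ∧ (∃ c : ℤ, g.v.z = (c : ℝ) / (2 * ((k : ℕ) : ℝ)))}) ∧
    ((LamPi k : Set Osc) = {g : Osc | (∃ n : ℤ, g.t = π * n) ∧ (∃ a : ℤ, g.v.x = a) ∧
      (∃ b : ℤ, g.v.y = b) ∧ (∃ c : ℤ, g.v.z = (c : ℝ) / (2 * ((k : ℕ) : ℝ)))}) ∧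
    ((LamPi2 k : Set Osc) = {g : Osc | (∃ n : ℤ, g.t = π / 2 * n) ∧ (∃ a : ℤ, g.v.x = a) ∧
      (∃ b : ℤ, g.v.y = b) ∧ (∃ c : ℤ, g.v.z = (c : ℝ) / (2 * ((k : ℕ) : ℝ)))}) ∧
    ∀ Λ ∈ ({Lam0 k, LamPi k, LamPi2 k} : Set (Subgroup Osc)),
      DiscreteTopology Λ ∧ CompactSpace (Osc ⧸ Λ) := by
  refine ⟨rfl, rfl, rfl, ?_⟩
  intro Λ hΛ
  simp only [Set.mem_insert_iff, Set.mem_singleton_iff] at hΛ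
  rcases hΛ with rfl | rfl | rfl
  · exact ⟨discrete_lamTheta _ _ _ _ (by positivity),
      cocompact_lamTheta _ _ _ _ (by positivity)⟩
  · exact ⟨discrete_lamTheta _ _ _ _ (by positivity),
      cocompact_lamTheta _ _ _ _ (by positivity)⟩
  · exact ⟨discrete_lamTheta _ _ _ _ (by positivity),
      cocompact_lamTheta _ _ _ _ (by positivity)⟩
end

section
/- For every positive integer k, one has Λ_{k,0} ⊆ Λ_{k,π} ⊆ Λ_{k,π/2}; moreover Λ_{k,0} is a normal subgroup of index 2 in Λ_{k,π}, Λ_{k,π} is a normal subgroup of index 2 in Λ_{k,π/2}, and Λ_{k,0} is a normal subgroup of index 4 in Λ_{k,π/2}. -/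
open Real

/-- The integer "level" of an element of the oscillator group relative to the step `θ`. -/
noncomputable def ind (θ : ℝ) (g : Osc) : ℤ := ⌊g.t / θ⌋

lemma ind_eq {θ : ℝ} (hθ : θ ≠ 0) {g : Osc} {n : ℤ} (h : g.t = θ * n) : ind θ g = n := by
  unfold ind
  rw [h, mul_comm, mul_div_assoc, div_self hθ, mul_one, Int.floor_intCast]

lemma mem_lamTheta_iff (k : ℕ+) (θ : ℝ) (m : ℤ) (hθ : θ = π / 2 * m) (g : Osc) :
    g ∈ LamTheta k θ m hθ ↔ (∃ n : ℤ, g.t = θ * n) ∧ (∃ a : ℤ, g.v.x = a) ∧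
      (∃ b : ℤ, g.v.y = b) ∧ (∃ c : ℤ, g.v.z = (c : ℝ) / (2 * ((k : ℕ) : ℝ))) := Iff.rfl

lemma pi2_ne_zero : (π / 2 : ℝ) ≠ 0 := by positivity

/-- The level homomorphism from `LamPi2` with values in `ZMod d`, coming from `t ↦ ⌊t/(π/2)⌋`. -/
noncomputable def levPi2 (k : ℕ+) (d : ℕ) : ↥(LamPi2 k) →* Multiplicative (ZMod d) where
  toFun g := Multiplicative.ofAdd ((ind (π / 2) g.1 : ZMod d))
  map_one' := by
    have : ind (π / 2) (1 : Osc) = 0 := ind_eq pi2_ne_zero (n := 0) (by simp)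
    simp [this]
  map_mul' g h := by
    obtain ⟨⟨n, hn⟩, -⟩ := g.2
    obtain ⟨⟨m, hm⟩, -⟩ := h.2
    have h1 : ind (π / 2) (g.1 * h.1) = n + m :=
      ind_eq pi2_ne_zero (by simp [hn, hm]; push_cast; ring)
    have h2 : ind (π / 2) g.1 = n := ind_eq pi2_ne_zero hn
    have h3 : ind (π / 2) h.1 = m := ind_eq pi2_ne_zero hm
    simp only [Subgroup.coe_mul, h1, h2, h3, ← ofAdd_add]
    push_cast
    rfl

/-- The level homomorphism from `LamPi` with values in `ZMod 2`, coming from `t ↦ ⌊t/π⌋`. -/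
noncomputable def levPi (k : ℕ+) : ↥(LamPi k) →* Multiplicative (ZMod 2) where
  toFun g := Multiplicative.ofAdd ((ind π g.1 : ZMod 2))
  map_one' := by
    have : ind π (1 : Osc) = 0 := ind_eq Real.pi_ne_zero (n := 0) (by simp)
    simp [this]
  map_mul' g h := by
    obtain ⟨⟨n, hn⟩, -⟩ := g.2
    obtain ⟨⟨m, hm⟩, -⟩ := h.2
    have h1 : ind π (g.1 * h.1) = n + m :=
      ind_eq Real.pi_ne_zero (by simp [hn, hm]; push_cast; ring)
    have h2 : ind π g.1 = n := ind_eq Real.pi_ne_zero hn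
    have h3 : ind π h.1 = m := ind_eq Real.pi_ne_zero hm
    simp only [Subgroup.coe_mul, h1, h2, h3, ← ofAdd_add]
    push_cast
    rfl

lemma lam0_le_lamPi (k : ℕ+) : Lam0 k ≤ LamPi k := by
  rintro g ⟨⟨n, hn⟩, hrest⟩
  exact ⟨⟨2 * n, by rw [hn]; push_cast; ring⟩, hrest⟩

lemma lamPi_le_lamPi2 (k : ℕ+) : LamPi k ≤ LamPi2 k := by
  rintro g ⟨⟨n, hn⟩, hrest⟩
  exact ⟨⟨2 * n, by rw [hn]; push_cast; ring⟩, hrest⟩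

lemma ker_levPi (k : ℕ+) : (levPi k).ker = (Lam0 k).subgroupOf (LamPi k) := by
  ext g
  obtain ⟨⟨n, hn⟩, hrest⟩ := g.2
  have hI : ind π g.1 = n := ind_eq Real.pi_ne_zero hn
  simp only [MonoidHom.mem_ker, Subgroup.mem_subgroupOf]
  constructor
  · intro h
    have h0 : ((n : ZMod 2) = 0) := by
      have h1 : Multiplicative.ofAdd ((ind π g.1 : ZMod 2)) = 1 := h
      rw [hI] at h1
      exact ofAdd_eq_one.mp h1
    obtain ⟨m, hm⟩ := (ZMod.intCast_zmod_eq_zero_iff_dvd n 2).mp h0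
    exact ⟨⟨m, by rw [hn, hm]; push_cast; ring⟩, hrest⟩
  · rintro ⟨⟨m, hm⟩, -⟩
    have hn2 : n = 2 * m := by
      have h1 : (π : ℝ) * n = π * (2 * m) := by rw [← hn, hm]; push_cast; ring
      exact_mod_cast mul_left_cancel₀ Real.pi_ne_zero h1
    rw [show (levPi k) g = Multiplicative.ofAdd ((ind π g.1 : ZMod 2)) from rfl, hI]
    exact ofAdd_eq_one.mpr ((ZMod.intCast_zmod_eq_zero_iff_dvd _ _).mpr ⟨m, hn2⟩)

lemma ker_levPi2_two (k : ℕ+) : (levPi2 k 2).ker = (LamPi k).subgroupOf (LamPi2 k) := by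
  ext g
  obtain ⟨⟨n, hn⟩, hrest⟩ := g.2
  have hI : ind (π / 2) g.1 = n := ind_eq pi2_ne_zero hn
  simp only [MonoidHom.mem_ker, Subgroup.mem_subgroupOf]
  constructor
  · intro h
    have h0 : ((n : ZMod 2) = 0) := by
      have h1 : Multiplicative.ofAdd ((ind (π / 2) g.1 : ZMod 2)) = 1 := h
      rw [hI] at h1
      exact ofAdd_eq_one.mp h1
    obtain ⟨m, hm⟩ := (ZMod.intCast_zmod_eq_zero_iff_dvd n 2).mp h0
    exact ⟨⟨m, by rw [hn, hm]; push_cast; ring⟩, hrest⟩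
  · rintro ⟨⟨m, hm⟩, -⟩
    have hn2 : n = 2 * m := by
      have h1 : (π / 2 : ℝ) * n = π / 2 * (2 * m) := by rw [← hn, hm]; push_cast; ring
      exact_mod_cast mul_left_cancel₀ pi2_ne_zero h1
    rw [show (levPi2 k 2) g = Multiplicative.ofAdd ((ind (π / 2) g.1 : ZMod 2)) from rfl, hI]
    exact ofAdd_eq_one.mpr ((ZMod.intCast_zmod_eq_zero_iff_dvd _ _).mpr ⟨m, hn2⟩)

lemma ker_levPi2_four (k : ℕ+) : (levPi2 k 4).ker = (Lam0 k).subgroupOf (LamPi2 k) := by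
  ext g
  obtain ⟨⟨n, hn⟩, hrest⟩ := g.2
  have hI : ind (π / 2) g.1 = n := ind_eq pi2_ne_zero hn
  simp only [MonoidHom.mem_ker, Subgroup.mem_subgroupOf]
  constructor
  · intro h
    have h0 : ((n : ZMod 4) = 0) := by
      have h1 : Multiplicative.ofAdd ((ind (π / 2) g.1 : ZMod 4)) = 1 := h
      rw [hI] at h1
      exact ofAdd_eq_one.mp h1
    obtain ⟨m, hm⟩ := (ZMod.intCast_zmod_eq_zero_iff_dvd n 4).mp h0
    exact ⟨⟨m, by rw [hn, hm]; push_cast; ring⟩, hrest⟩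
  · rintro ⟨⟨m, hm⟩, -⟩
    have hn2 : n = 4 * m := by
      have h1 : (π / 2 : ℝ) * n = π / 2 * (4 * m) := by rw [← hn, hm]; push_cast; ring
      exact_mod_cast mul_left_cancel₀ pi2_ne_zero h1
    rw [show (levPi2 k 4) g = Multiplicative.ofAdd ((ind (π / 2) g.1 : ZMod 4)) from rfl, hI]
    exact ofAdd_eq_one.mpr ((ZMod.intCast_zmod_eq_zero_iff_dvd _ _).mpr ⟨m, hn2⟩)

lemma levPi_surjective (k : ℕ+) : Function.Surjective (levPi k) := by
  intro c
  obtain ⟨n, hn⟩ := ZMod.intCast_surjective (n := 2) (Multiplicative.toAdd c)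
  refine ⟨⟨⟨π * n, 1⟩, ⟨⟨n, rfl⟩, ⟨0, by simp⟩, ⟨0, by simp⟩, ⟨0, by simp⟩⟩⟩, ?_⟩
  show Multiplicative.ofAdd ((ind π (⟨π * n, 1⟩ : Osc) : ZMod 2)) = c
  rw [ind_eq Real.pi_ne_zero (g := (⟨π * n, 1⟩ : Osc)) rfl, hn]
  simp

lemma levPi2_surjective (k : ℕ+) (d : ℕ) : Function.Surjective (levPi2 k d) := by
  intro c
  obtain ⟨n, hn⟩ := ZMod.intCast_surjective (n := d) (Multiplicative.toAdd c)
  refine ⟨⟨⟨π / 2 * n, 1⟩, ⟨⟨n, rfl⟩, ⟨0, by simp⟩, ⟨0, by simp⟩, ⟨0, by simp⟩⟩⟩, ?_⟩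
  show Multiplicative.ofAdd ((ind (π / 2) (⟨π / 2 * n, 1⟩ : Osc) : ZMod d)) = c
  rw [ind_eq pi2_ne_zero (g := (⟨π / 2 * n, 1⟩ : Osc)) rfl, hn]
  simp

lemma index_of_ker {G M : Type*} [Group G] [Group M] [Fintype M] (f : G →* M)
    (hf : Function.Surjective f) : f.ker.index = Nat.card M := by
  rw [Subgroup.index_ker, MonoidHom.range_eq_top.mpr hf, Subgroup.card_top]

lemma card_mult_zmod (d : ℕ) [NeZero d] : Nat.card (Multiplicative (ZMod d)) = d := by
  rw [Nat.card_congr Multiplicative.toAdd, Nat.card_zmod]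

/-- `Λ_{k,0} ⊆ Λ_{k,π} ⊆ Λ_{k,π/2}`, with the stated normalities and
indices. -/
theorem statement3 (k : ℕ+) :
    Lam0 k ≤ LamPi k ∧ LamPi k ≤ LamPi2 k ∧
    ((Lam0 k).subgroupOf (LamPi k)).Normal ∧ ((Lam0 k).subgroupOf (LamPi k)).index = 2 ∧
    ((LamPi k).subgroupOf (LamPi2 k)).Normal ∧ ((LamPi k).subgroupOf (LamPi2 k)).index = 2 ∧
    ((Lam0 k).subgroupOf (LamPi2 k)).Normal ∧ ((Lam0 k).subgroupOf (LamPi2 k)).index = 4 := by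
  refine ⟨lam0_le_lamPi k, lamPi_le_lamPi2 k, ?_, ?_, ?_, ?_, ?_, ?_⟩
  · rw [← ker_levPi k]; exact (levPi k).normal_ker
  · rw [← ker_levPi k, index_of_ker _ (levPi_surjective k), card_mult_zmod]
  · rw [← ker_levPi2_two k]; exact (levPi2 k 2).normal_ker
  · rw [← ker_levPi2_two k, index_of_ker _ (levPi2_surjective k 2), card_mult_zmod]
  · rw [← ker_levPi2_four k]; exact (levPi2 k 4).normal_ker
  · rw [← ker_levPi2_four k, index_of_ker _ (levPi2_surjective k 4), card_mult_zmod]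
end

section
/- For every positive integer k, the commutator subgroup (derived subgroup) of Λ_{k,0} is exactly C = {0} × {0} × {0} × ℤ. -/
open Real

lemma cos_of_two_pi_int {t : ℝ} (n : ℤ) (h : t = 2 * π * n) : cos t = 1 := by
  rw [h, mul_comm]; exact Real.cos_int_mul_two_pi n

lemma sin_of_two_pi_int {t : ℝ} (n : ℤ) (h : t = 2 * π * n) : sin t = 0 := by
  have : t = ((2 * n : ℤ) : ℝ) * π := by rw [h]; push_cast; ring
  rw [this]; exact Real.sin_int_mul_pi _

/-- The candidate subgroup `{0}×{0}×{0}×ℤ` inside `Λ_{k,0}`. -/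
noncomputable def Ksub (k : ℕ+) : Subgroup (Lam0 k) where
  carrier := {g | (g : Osc).t = 0 ∧ (g : Osc).v.x = 0 ∧ (g : Osc).v.y = 0 ∧
    ∃ c : ℤ, (g : Osc).v.z = c}
  one_mem' := ⟨rfl, rfl, rfl, 0, by simp [OneMemClass.coe_one]⟩
  mul_mem' := by
    rintro a b ⟨ht, hx, hy, c, hz⟩ ⟨ht', hx', hy', c', hz'⟩
    refine ⟨?_, ?_, ?_, ⟨c + c', ?_⟩⟩ <;>
      simp [Subgroup.coe_mul, ht, ht', hx, hx', hy, hy', hz, hz'] <;> push_cast <;> ring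
  inv_mem' := by
    rintro a ⟨ht, hx, hy, c, hz⟩
    refine ⟨?_, ?_, ?_, ⟨-c, ?_⟩⟩ <;>
      simp [ht, hx, hy, hz] <;> push_cast <;> ring

/-- The commutator (derived) subgroup of `Λ_{k,0}` is exactly
`C = {0} × {0} × {0} × ℤ`. -/
theorem statement6 (k : ℕ+) (g : Lam0 k) :
    g ∈ commutator (Lam0 k) ↔
      ((g : Osc).t = 0 ∧ (g : Osc).v.x = 0 ∧ (g : Osc).v.y = 0 ∧
        ∃ c : ℤ, (g : Osc).v.z = c) := by
  constructor
  · intro hg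
    rw [commutator_def] at hg
    have hle : ⁅(⊤ : Subgroup (Lam0 k)), ⊤⁆ ≤ Ksub k := by
      rw [Subgroup.commutator_le]
      intro a _ b _
      obtain ⟨⟨n₁, hn₁⟩, ⟨a₁, ha₁⟩, ⟨b₁, hb₁⟩, ⟨c₁, hc₁⟩⟩ := a.2
      obtain ⟨⟨n₂, hn₂⟩, ⟨a₂, ha₂⟩, ⟨b₂, hb₂⟩, ⟨c₂, hc₂⟩⟩ := b.2
      have hca : cos (a : Osc).t = 1 := cos_of_two_pi_int n₁ hn₁
      have hsa : sin (a : Osc).t = 0 := sin_of_two_pi_int n₁ hn₁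
      have hcb : cos (b : Osc).t = 1 := cos_of_two_pi_int n₂ hn₂
      have hsb : sin (b : Osc).t = 0 := sin_of_two_pi_int n₂ hn₂
      refine ⟨?_, ?_, ?_, ⟨a₁ * b₂ - a₂ * b₁, ?_⟩⟩ <;>
        simp only [commutatorElement_def, Subgroup.coe_mul, Subgroup.coe_inv,
          Osc.mul_t, Osc.mul_v, Osc.inv_t, Osc.inv_v, Heis.mul_x, Heis.mul_y, Heis.mul_z,
          Heis.inv_x, Heis.inv_y, Heis.inv_z, alphaMap_x, alphaMap_y, alphaMap_z,
          cos_add, sin_add, cos_neg, sin_neg, hca, hsa, hcb, hsb, ha₁, hb₁, hc₁, ha₂, hb₂, hc₂] <;>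
        push_cast <;> ring
    exact hle hg
  · rintro ⟨ht, hx, hy, c, hz⟩
    have hu : (⟨0, ⟨1, 0, 0⟩⟩ : Osc) ∈ Lam0 k :=
      ⟨⟨0, by simp⟩, ⟨1, by simp⟩, ⟨0, by simp⟩, ⟨0, by simp⟩⟩
    have hw : (⟨0, ⟨0, (c : ℝ), 0⟩⟩ : Osc) ∈ Lam0 k :=
      ⟨⟨0, by simp⟩, ⟨0, by simp⟩, ⟨c, by simp⟩, ⟨0, by simp⟩⟩
    open scoped commutatorElement in
    have hg : g = ⁅(⟨_, hu⟩ : Lam0 k), (⟨_, hw⟩ : Lam0 k)⁆ := by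
      apply Subtype.ext
      apply Osc.ext
      · simp [commutatorElement_def, ht]
      · apply Heis.ext <;>
          simp [commutatorElement_def, alphaMap, hx, hy, hz, ht] <;> ring
    rw [hg, commutator_def]
    exact Subgroup.commutator_mem_commutator (Subgroup.mem_top _) (Subgroup.mem_top _)
end

section
/- Let k, p be positive integers, let i, j ∈ {0, π, π/2}, and let φ : Λ_{p,j} → Λ_{k,i} be a group isomorphism. Then for every element γ ∈ Λ_{p,j} whose first coordinate is an odd integer multiple of π, the first coordinate of φ(γ) is not an even integer multiple of π (i.e. φ never maps an element with first coordinate in π + 2πℤ to an element with first coordinate in 2πℤ). -/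
open Real

lemma central_aux (T z : ℝ) (hc : cos T = 1) (hs : sin T = 0) (g : Osc) :
    (⟨T, ⟨0, 0, z⟩⟩ : Osc) * g = g * ⟨T, ⟨0, 0, z⟩⟩ := by
  ext <;> simp [hc, hs] <;> ring

lemma memX (k : ℕ+) (θ : ℝ) (m : ℤ) (hθ : θ = π / 2 * m) :
    (⟨0, ⟨1, 0, 0⟩⟩ : Osc) ∈ LamTheta k θ m hθ :=
  ⟨⟨0, by simp⟩, ⟨1, by simp⟩, ⟨0, by simp⟩, ⟨0, by simp⟩⟩

lemma memY (k : ℕ+) (θ : ℝ) (m : ℤ) (hθ : θ = π / 2 * m) :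
    (⟨0, ⟨0, 1, 0⟩⟩ : Osc) ∈ LamTheta k θ m hθ :=
  ⟨⟨0, by simp⟩, ⟨0, by simp⟩, ⟨1, by simp⟩, ⟨0, by simp⟩⟩

/-- An isomorphism `φ : Λ_{p,j} → Λ_{k,i}` never maps an element whose first
coordinate is an odd integer multiple of `π` to an element whose first coordinate is an even
integer multiple of `π`. -/
theorem statement8 (k p : ℕ+) (Λ₁ Λ₂ : Subgroup Osc)
    (h₁ : Λ₁ ∈ ({Lam0 p, LamPi p, LamPi2 p} : Set (Subgroup Osc)))
    (h₂ : Λ₂ ∈ ({Lam0 k, LamPi k, LamPi2 k} : Set (Subgroup Osc)))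
    (φ : Λ₁ ≃* Λ₂) (γ : Λ₁) (l : ℤ) (hγ : (γ : Osc).t = (2 * l + 1) * π) :
    ¬ ∃ l' : ℤ, ((φ γ : Λ₂) : Osc).t = 2 * π * l' := by
  rintro ⟨l', hl'⟩
  have hmem₁x : (⟨0, ⟨1, 0, 0⟩⟩ : Osc) ∈ Λ₁ := by
    rcases h₁ with rfl | rfl | rfl <;> exact memX ..
  have hmem₂x : (⟨0, ⟨1, 0, 0⟩⟩ : Osc) ∈ Λ₂ := by
    rcases h₂ with rfl | rfl | rfl <;> exact memX ..
  have hmem₂y : (⟨0, ⟨0, 1, 0⟩⟩ : Osc) ∈ Λ₂ := by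
    rcases h₂ with rfl | rfl | rfl <;> exact memY ..
  -- trig values for γ.t = (2l+1)π
  have hcT : cos (γ : Osc).t = -1 := by
    rw [hγ, show ((2 * (l : ℝ) + 1)) * π = π + (l : ℤ) * (2 * π) by push_cast; ring,
      Real.cos_add_int_mul_two_pi, Real.cos_pi]
  have hsT : sin (γ : Osc).t = 0 := by
    rw [hγ, show ((2 * (l : ℝ) + 1)) * π = π + (l : ℤ) * (2 * π) by push_cast; ring,
      Real.sin_add_int_mul_two_pi, Real.sin_pi]
  -- γ² is central in Osc
  have sqγ : (γ : Osc) * (γ : Osc) = ⟨2 * (γ : Osc).t, ⟨0, 0, 2 * (γ : Osc).v.z⟩⟩ := by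
    ext <;> simp [hcT, hsT] <;> ring
  have hc2 : cos (2 * (γ : Osc).t) = 1 := by rw [Real.cos_two_mul, hcT]; norm_num
  have hs2 : sin (2 * (γ : Osc).t) = 0 := by rw [Real.sin_two_mul, hsT]; ring
  have hcent : ∀ g : Osc, (γ : Osc) * (γ : Osc) * g = g * ((γ : Osc) * (γ : Osc)) := by
    intro g; rw [sqγ]; exact central_aux _ _ hc2 hs2 g
  set w := ((φ γ : Λ₂) : Osc) with hw
  -- w² commutes with everything in Λ₂
  have key : ∀ a : Λ₂, w * w * (a : Osc) = (a : Osc) * (w * w) := by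
    intro a
    have h1 : γ * γ * (φ.symm a) = (φ.symm a) * (γ * γ) := Subtype.ext (hcent _)
    have h2 := congrArg φ h1
    simp only [map_mul, MulEquiv.apply_symm_apply] at h2
    have h3 := congrArg (fun z : Λ₂ => (z : Osc)) h2
    simpa using h3
  -- trig values for w.t = 2πl'
  have hcw : cos w.t = 1 := by
    rw [hl', show 2 * π * (l' : ℝ) = 0 + (l' : ℤ) * (2 * π) by push_cast; ring,
      Real.cos_add_int_mul_two_pi, Real.cos_zero]
  have hsw : sin w.t = 0 := by
    rw [hl', show 2 * π * (l' : ℝ) = 0 + (l' : ℤ) * (2 * π) by push_cast; ring,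
      Real.sin_add_int_mul_two_pi, Real.sin_zero]
  have sqw : w * w = ⟨2 * w.t, ⟨2 * w.v.x, 2 * w.v.y, 2 * w.v.z⟩⟩ := by
    ext <;> simp [hcw, hsw] <;> ring
  have hc2w : cos (2 * w.t) = 1 := by rw [Real.cos_two_mul, hcw]; norm_num
  have hs2w : sin (2 * w.t) = 0 := by rw [Real.sin_two_mul, hsw]; ring
  have hy0 : w.v.y = 0 := by
    have e1 := key ⟨⟨0, ⟨1, 0, 0⟩⟩, hmem₂x⟩
    rw [sqw] at e1
    have := congrArg (fun g : Osc => g.v.z) e1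
    simp [hc2w, hs2w] at this
    linarith
  have hx0 : w.v.x = 0 := by
    have e1 := key ⟨⟨0, ⟨0, 1, 0⟩⟩, hmem₂y⟩
    rw [sqw] at e1
    have := congrArg (fun g : Osc => g.v.z) e1
    simp [hc2w, hs2w] at this
    linarith
  -- so w is central in Osc
  have weq : w = ⟨w.t, ⟨0, 0, w.v.z⟩⟩ := by ext <;> simp [hx0, hy0]
  have wcent : ∀ g : Osc, w * g = g * w := by
    intro g; rw [weq]; exact central_aux _ _ hcw hsw g
  -- pull back: γ commutes with (0,(1,0,0)) ∈ Λ₁, contradiction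
  set a1 : Λ₁ := ⟨⟨0, ⟨1, 0, 0⟩⟩, hmem₁x⟩ with ha1
  have hcomm : γ * a1 = a1 * γ := by
    apply φ.injective
    apply Subtype.ext
    simp only [map_mul, Subgroup.coe_mul]
    exact wcent _
  have := congrArg (fun g : Λ₁ => ((g : Osc)).v.x) hcomm
  simp [ha1, hcT, hsT] at this
  linarith
end

section
/- If k and p are positive integers with k ≠ p, then the groups Λ_{k,0} and Λ_{p,0} are not isomorphic. -/
open Real

/-! ### Auxiliary lemmas for statement9 -/

section Aux

open scoped commutatorElement

/-- The invariant predicate: every central element some positive power of which lies in the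
commutator subgroup has its `n`-th power in the commutator subgroup. -/
def Qprop (G : Type*) [Group G] (n : ℕ) : Prop :=
  ∀ g : G, (∀ h : G, Commute g h) →
    (∃ m : ℕ, 0 < m ∧ g ^ m ∈ commutator G) → g ^ n ∈ commutator G

lemma mem_commutator_equiv {G H : Type*} [Group G] [Group H] (e : G ≃* H) (x : G)
    (hx : x ∈ commutator G) : e x ∈ commutator H := by
  have hmap : (commutator G).map e.toMonoidHom = commutator H := by
    rw [commutator, Subgroup.map_commutator,
      Subgroup.map_top_of_surjective _ e.surjective, commutator]
  rw [← hmap]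
  exact Subgroup.mem_map_of_mem _ hx

lemma Qprop_transfer {G H : Type*} [Group G] [Group H] (e : G ≃* H) (n : ℕ)
    (hQ : Qprop G n) : Qprop H n := by
  rintro g hg ⟨m, hm, hgm⟩
  have h1 : ∀ h : G, Commute (e.symm g) h := fun h => by
    have := (hg (e h)).map e.symm.toMonoidHom
    simpa using this
  have h2 : (e.symm g) ^ m ∈ commutator G := by
    have := mem_commutator_equiv e.symm (g ^ m) hgm
    simpa using this
  have h3 := hQ (e.symm g) h1 ⟨m, hm, h2⟩
  have h4 := mem_commutator_equiv e _ h3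
  simpa using h4

lemma alphaMap_two_pi_int {t : ℝ} (h : ∃ n : ℤ, t = 2 * π * n) (v : Heis) :
    alphaMap t v = v := by
  obtain ⟨n, rfl⟩ := h
  have hc : Real.cos (2 * π * n) = 1 := by
    rw [show (2 : ℝ) * π * n = n * (2 * π) by ring]; exact Real.cos_int_mul_two_pi n
  have hs : Real.sin (2 * π * n) = 0 := by
    rw [show (2 : ℝ) * π * n = ((2 * n : ℤ) : ℝ) * π by push_cast; ring]
    exact Real.sin_int_mul_pi _
  ext <;> simp [hc, hs]

lemma mem_Lam0 {k : ℕ+} {g : Osc} :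
    g ∈ Lam0 k ↔ (∃ n : ℤ, g.t = 2 * π * n) ∧ (∃ a : ℤ, g.v.x = a) ∧ (∃ b : ℤ, g.v.y = b) ∧
      (∃ c : ℤ, g.v.z = (c : ℝ) / (2 * ((k : ℕ) : ℝ))) := Iff.rfl

lemma osc_mul_eq (a b : Osc) (ha : ∃ n : ℤ, a.t = 2 * π * n) :
    a * b = ⟨a.t + b.t, a.v * b.v⟩ := by
  show (⟨a.t + b.t, a.v * alphaMap a.t b.v⟩ : Osc) = _
  rw [alphaMap_two_pi_int ha]

lemma osc_inv_eq (a : Osc) (ha : ∃ n : ℤ, a.t = 2 * π * n) :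
    a⁻¹ = ⟨-a.t, a.v⁻¹⟩ := by
  show (⟨-a.t, alphaMap (-a.t) a.v⁻¹⟩ : Osc) = _
  obtain ⟨n, hn⟩ := ha
  rw [alphaMap_two_pi_int ⟨-n, by rw [hn]; push_cast; ring⟩]

/-- The subgroup of `Osc` of elements `(0,(0,0,m))`, `m ∈ ℤ`. -/
noncomputable def Kgrp : Subgroup Osc where
  carrier := {g | g.t = 0 ∧ g.v.x = 0 ∧ g.v.y = 0 ∧ ∃ m : ℤ, g.v.z = m}
  one_mem' := ⟨rfl, rfl, rfl, 0, by simp⟩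
  mul_mem' := by
    rintro a b ⟨ht, hx, hy, m, hz⟩ ⟨ht', hx', hy', m', hz'⟩
    have h0 : a * b = ⟨a.t + b.t, a.v * b.v⟩ := osc_mul_eq a b ⟨0, by simp [ht]⟩
    refine ⟨?_, ?_, ?_, m + m', ?_⟩ <;>
      simp [h0, ht, ht', hx, hx', hy, hy', hz, hz'] <;> push_cast <;> ring
  inv_mem' := by
    rintro a ⟨ht, hx, hy, m, hz⟩
    have h0 : a⁻¹ = ⟨-a.t, a.v⁻¹⟩ := osc_inv_eq a ⟨0, by simp [ht]⟩
    refine ⟨?_, ?_, ?_, -m, ?_⟩ <;> simp [h0, ht, hx, hy, hz]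

lemma commutator_mem_Kgrp {g h : Osc} (hg : ∃ n : ℤ, g.t = 2 * π * n)
    (hh : ∃ n : ℤ, h.t = 2 * π * n)
    (hgx : ∃ a : ℤ, g.v.x = a) (hgy : ∃ b : ℤ, g.v.y = b)
    (hhx : ∃ a : ℤ, h.v.x = a) (hhy : ∃ b : ℤ, h.v.y = b) :
    ⁅g, h⁆ ∈ Kgrp := by
  obtain ⟨n₁, hn₁⟩ := hg
  obtain ⟨n₂, hn₂⟩ := hh
  obtain ⟨a₁, ha₁⟩ := hgx
  obtain ⟨b₁, hb₁⟩ := hgy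
  obtain ⟨a₂, ha₂⟩ := hhx
  obtain ⟨b₂, hb₂⟩ := hhy
  have e1 : g * h = ⟨g.t + h.t, g.v * h.v⟩ := osc_mul_eq _ _ ⟨n₁, hn₁⟩
  have e2 : g⁻¹ = ⟨-g.t, g.v⁻¹⟩ := osc_inv_eq _ ⟨n₁, hn₁⟩
  have e3 : h⁻¹ = ⟨-h.t, h.v⁻¹⟩ := osc_inv_eq _ ⟨n₂, hn₂⟩
  have e4 : g * h * g⁻¹ = ⟨h.t, g.v * h.v * g.v⁻¹⟩ := by
    rw [e1, e2, osc_mul_eq (⟨g.t + h.t, g.v * h.v⟩ : Osc) _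
      ⟨n₁ + n₂, by simp only [hn₁, hn₂]; push_cast; ring⟩]
    exact Osc.ext (by simp) rfl
  have e5 : ⁅g, h⁆ = ⟨0, g.v * h.v * g.v⁻¹ * h.v⁻¹⟩ := by
    rw [commutatorElement_def, e4, e3,
      osc_mul_eq (⟨h.t, g.v * h.v * g.v⁻¹⟩ : Osc) _ ⟨n₂, hn₂⟩]
    exact Osc.ext (by simp) rfl
  refine ⟨by rw [e5], ?_, ?_, a₁ * b₂ - a₂ * b₁, ?_⟩ <;>
    rw [e5] <;> simp [ha₁, hb₁, ha₂, hb₂] <;> push_cast <;> ring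

lemma central_pow (zv : ℝ) (m : ℕ) :
    (⟨0, ⟨0, 0, zv⟩⟩ : Osc) ^ m = ⟨0, ⟨0, 0, (m : ℝ) * zv⟩⟩ := by
  induction m with
  | zero => simp [pow_zero]; exact Osc.ext rfl (Heis.ext rfl rfl (by simp))
  | succ n ih =>
    rw [pow_succ, ih, osc_mul_eq _ _ ⟨0, by simp⟩]
    refine Osc.ext (by simp) (Heis.ext (by simp) (by simp) ?_)
    show (n : ℝ) * zv + zv + ((0 : ℝ) * 0 - 0 * 0) / 2 = (((n + 1 : ℕ) : ℝ)) * zv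
    push_cast; ring

lemma osc_pow_t (g : Osc) (m : ℕ) : (g ^ m).t = m * g.t := by
  induction m with
  | zero => simp [pow_zero]
  | succ n ih => rw [pow_succ]; show (g ^ n).t + g.t = _; rw [ih]; push_cast; ring

end Aux
section Main

open scoped commutatorElement

lemma osc_commutator_eq (g h : Osc) (hg : ∃ n : ℤ, g.t = 2 * π * n)
    (hh : ∃ n : ℤ, h.t = 2 * π * n) :
    ⁅g, h⁆ = ⟨0, ⟨0, 0, g.v.x * h.v.y - h.v.x * g.v.y⟩⟩ := by
  obtain ⟨n₁, hn₁⟩ := hg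
  obtain ⟨n₂, hn₂⟩ := hh
  have e1 : g * h = ⟨g.t + h.t, g.v * h.v⟩ := osc_mul_eq _ _ ⟨n₁, hn₁⟩
  have e2 : g⁻¹ = ⟨-g.t, g.v⁻¹⟩ := osc_inv_eq _ ⟨n₁, hn₁⟩
  have e3 : h⁻¹ = ⟨-h.t, h.v⁻¹⟩ := osc_inv_eq _ ⟨n₂, hn₂⟩
  have e4 : g * h * g⁻¹ = ⟨h.t, g.v * h.v * g.v⁻¹⟩ := by
    rw [e1, e2, osc_mul_eq (⟨g.t + h.t, g.v * h.v⟩ : Osc) _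
      ⟨n₁ + n₂, by simp only [hn₁, hn₂]; push_cast; ring⟩]
    exact Osc.ext (by simp) rfl
  have e5 : ⁅g, h⁆ = ⟨0, g.v * h.v * g.v⁻¹ * h.v⁻¹⟩ := by
    rw [commutatorElement_def, e4, e3,
      osc_mul_eq (⟨h.t, g.v * h.v * g.v⁻¹⟩ : Osc) _ ⟨n₂, hn₂⟩]
    exact Osc.ext (by simp) rfl
  rw [e5]
  refine Osc.ext rfl (Heis.ext ?_ ?_ ?_) <;> simp <;> ring

noncomputable def E1 (k : ℕ+) : ↥(Lam0 k) :=
  ⟨⟨0, ⟨1, 0, 0⟩⟩, mem_Lam0.mpr ⟨⟨0, by simp⟩, ⟨1, by simp⟩, ⟨0, by simp⟩, ⟨0, by simp⟩⟩⟩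

noncomputable def E2 (k : ℕ+) : ↥(Lam0 k) :=
  ⟨⟨0, ⟨0, 1, 0⟩⟩, mem_Lam0.mpr ⟨⟨0, by simp⟩, ⟨0, by simp⟩, ⟨1, by simp⟩, ⟨0, by simp⟩⟩⟩

noncomputable def W (k : ℕ+) : ↥(Lam0 k) :=
  ⟨⟨0, ⟨0, 0, 1⟩⟩, mem_Lam0.mpr ⟨⟨0, by simp⟩, ⟨0, by simp⟩, ⟨0, by simp⟩,
    ⟨2 * (k : ℕ), by
      have hk : ((k : ℕ) : ℝ) ≠ 0 := by exact_mod_cast k.ne_zero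
      push_cast
      field_simp⟩⟩⟩

lemma coe_commutator {k : ℕ+} (a b : ↥(Lam0 k)) :
    ((⁅a, b⁆ : ↥(Lam0 k)) : Osc) = ⁅(a : Osc), (b : Osc)⁆ := by
  simp [commutatorElement_def]

lemma W_mem (k : ℕ+) : W k ∈ commutator ↥(Lam0 k) := by
  have hW : W k = ⁅E1 k, E2 k⁆ := by
    apply Subtype.ext
    rw [coe_commutator, osc_commutator_eq _ _ ⟨0, by simp [E1]⟩ ⟨0, by simp [E2]⟩]
    refine Osc.ext rfl (Heis.ext rfl rfl ?_)
    show (1 : ℝ) = 1 * 1 - 0 * 0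
    norm_num
  rw [hW]
  exact Subgroup.commutator_mem_commutator (Subgroup.mem_top _) (Subgroup.mem_top _)

lemma commutator_le_K (k : ℕ+) :
    commutator ↥(Lam0 k) ≤ Kgrp.comap (Lam0 k).subtype := by
  rw [commutator, Subgroup.commutator_le]
  intro g _ h _
  obtain ⟨hgt, ⟨a₁, ha₁⟩, ⟨b₁, hb₁⟩, -⟩ := mem_Lam0.mp g.2
  obtain ⟨hht, ⟨a₂, ha₂⟩, ⟨b₂, hb₂⟩, -⟩ := mem_Lam0.mp h.2
  show ((⁅g, h⁆ : ↥(Lam0 k)) : Osc) ∈ Kgrp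
  rw [coe_commutator, osc_commutator_eq _ _ hgt hht]
  exact ⟨rfl, rfl, rfl, a₁ * b₂ - a₂ * b₁, by
    show (g : Osc).v.x * (h : Osc).v.y - (h : Osc).v.x * (g : Osc).v.y = _
    rw [ha₁, hb₁, ha₂, hb₂]; push_cast; ring⟩

lemma central_xy {k : ℕ+} {g : ↥(Lam0 k)} (hc : ∀ h : ↥(Lam0 k), Commute g h) :
    (g : Osc).v.x = 0 ∧ (g : Osc).v.y = 0 := by
  obtain ⟨⟨n, hn⟩, -, -, -⟩ := mem_Lam0.mp g.2
  constructor
  · have e := congrArg Subtype.val (hc (E2 k))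
    simp only [MulMemClass.coe_mul] at e
    rw [osc_mul_eq _ _ ⟨n, hn⟩, osc_mul_eq _ _ ⟨0, by simp [E2]⟩] at e
    have ez := congrArg (fun o : Osc => o.v.z) e
    simp only [Heis.mul_z, E2] at ez
    linarith
  · have e := congrArg Subtype.val (hc (E1 k))
    simp only [MulMemClass.coe_mul] at e
    rw [osc_mul_eq _ _ ⟨n, hn⟩, osc_mul_eq _ _ ⟨0, by simp [E1]⟩] at e
    have ez := congrArg (fun o : Osc => o.v.z) e
    simp only [Heis.mul_z, E1] at ez
    linarith

lemma central_zpow (zv : ℝ) (m : ℤ) :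
    (⟨0, ⟨0, 0, zv⟩⟩ : Osc) ^ m = ⟨0, ⟨0, 0, (m : ℝ) * zv⟩⟩ := by
  cases m with
  | ofNat n =>
    rw [Int.ofNat_eq_natCast, zpow_natCast, central_pow]
    exact Osc.ext rfl (Heis.ext rfl rfl (by push_cast; ring))
  | negSucc n =>
    rw [zpow_negSucc, central_pow, osc_inv_eq _ ⟨0, by simp⟩]
    refine Osc.ext (by simp) (Heis.ext (by simp) (by simp) ?_)
    show -(((n + 1 : ℕ) : ℝ) * zv) = ((Int.negSucc n : ℤ) : ℝ) * zv
    rw [Int.cast_negSucc]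
    push_cast
    ring

lemma Q_two_k (k : ℕ+) : Qprop ↥(Lam0 k) (2 * (k : ℕ)) := by
  rintro g hc ⟨m, hm, hgm⟩
  have hk : ((k : ℕ) : ℝ) ≠ 0 := by exact_mod_cast k.ne_zero
  obtain ⟨⟨n, hn⟩, -, -, ⟨c, hcz⟩⟩ := mem_Lam0.mp g.2
  obtain ⟨hx0, hy0⟩ := central_xy hc
  have ht0 : (g : Osc).t = 0 := by
    have h1 : ((g : Osc) ^ m).t = 0 := by
      have h2 : ((g ^ m : ↥(Lam0 k)) : Osc) ∈ Kgrp := commutator_le_K k hgm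
      rw [SubgroupClass.coe_pow] at h2
      exact h2.1
    rw [osc_pow_t] at h1
    have hm' : (m : ℝ) ≠ 0 := by exact_mod_cast hm.ne'
    exact (mul_eq_zero.mp h1).resolve_left hm'
  have hval : (g : Osc) = ⟨0, ⟨0, 0, (c : ℝ) / (2 * ((k : ℕ) : ℝ))⟩⟩ :=
    Osc.ext ht0 (Heis.ext hx0 hy0 hcz)
  have key : g ^ (2 * (k : ℕ)) = (W k) ^ (c : ℤ) := by
    apply Subtype.ext
    rw [SubgroupClass.coe_pow, SubgroupClass.coe_zpow, hval]
    show _ = ((⟨0, ⟨0, 0, 1⟩⟩ : Osc)) ^ (c : ℤ)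
    rw [central_pow, central_zpow]
    refine Osc.ext rfl (Heis.ext rfl rfl ?_)
    show ((2 * (k : ℕ) : ℕ) : ℝ) * ((c : ℝ) / (2 * ((k : ℕ) : ℝ))) = (c : ℝ) * 1
    field_simp
    push_cast; ring
  rw [key]
  exact Subgroup.zpow_mem _ (W_mem k) _

lemma dvd_of_Q (k : ℕ+) (n : ℕ) (hQ : Qprop ↥(Lam0 k) n) : 2 * (k : ℕ) ∣ n := by
  have hk : ((k : ℕ) : ℝ) ≠ 0 := by exact_mod_cast k.ne_zero
  set g0 : ↥(Lam0 k) := ⟨⟨0, ⟨0, 0, 1 / (2 * ((k : ℕ) : ℝ))⟩⟩,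
    mem_Lam0.mpr ⟨⟨0, by simp⟩, ⟨0, by simp⟩, ⟨0, by simp⟩, ⟨1, by push_cast; ring⟩⟩⟩ with hg0
  have hcentral : ∀ h : ↥(Lam0 k), Commute g0 h := by
    intro h
    obtain ⟨⟨n', hn'⟩, -, -, -⟩ := mem_Lam0.mp h.2
    show g0 * h = h * g0
    apply Subtype.ext
    simp only [MulMemClass.coe_mul]
    rw [osc_mul_eq _ _ ⟨0, by simp [hg0]⟩, osc_mul_eq _ _ ⟨n', hn'⟩]
    refine Osc.ext (by simp [hg0]) (Heis.ext ?_ ?_ ?_) <;> simp [hg0] <;> ring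
  have hpow : g0 ^ (2 * (k : ℕ)) = W k := by
    apply Subtype.ext
    rw [SubgroupClass.coe_pow]
    show (⟨0, ⟨0, 0, 1 / (2 * ((k : ℕ) : ℝ))⟩⟩ : Osc) ^ (2 * (k : ℕ)) = ⟨0, ⟨0, 0, 1⟩⟩
    rw [central_pow]
    refine Osc.ext rfl (Heis.ext rfl rfl ?_)
    show ((2 * (k : ℕ) : ℕ) : ℝ) * (1 / (2 * ((k : ℕ) : ℝ))) = 1
    field_simp
    push_cast; ring
  have hmem : g0 ^ n ∈ commutator ↥(Lam0 k) := by
    refine hQ g0 hcentral ⟨2 * (k : ℕ), by positivity, ?_⟩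
    rw [hpow]; exact W_mem k
  have hK : ((g0 ^ n : ↥(Lam0 k)) : Osc) ∈ Kgrp := commutator_le_K k hmem
  rw [SubgroupClass.coe_pow] at hK
  obtain ⟨-, -, -, m, hz⟩ := hK
  rw [show ((g0 : Osc)) = ⟨0, ⟨0, 0, 1 / (2 * ((k : ℕ) : ℝ))⟩⟩ from rfl, central_pow] at hz
  have hz' : (n : ℝ) = (m : ℝ) * (2 * ((k : ℕ) : ℝ)) := by
    have : (n : ℝ) * (1 / (2 * ((k : ℕ) : ℝ))) = m := hz
    field_simp at this
    linarith [this]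
  have hz'' : (n : ℤ) = m * (2 * (k : ℕ)) := by exact_mod_cast hz'
  have : ((2 * (k : ℕ) : ℕ) : ℤ) ∣ (n : ℤ) := ⟨m, by push_cast; linarith [hz'']⟩
  exact_mod_cast this

end Main

/-- If `k ≠ p` then `Λ_{k,0}` and `Λ_{p,0}` are not isomorphic. -/
theorem statement9 (k p : ℕ+) (h : k ≠ p) : IsEmpty (Lam0 k ≃* Lam0 p) := by
  constructor
  intro e
  have h1 : 2 * (p : ℕ) ∣ 2 * (k : ℕ) :=
    dvd_of_Q p _ (Qprop_transfer e _ (Q_two_k k))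
  have h2 : 2 * (k : ℕ) ∣ 2 * (p : ℕ) :=
    dvd_of_Q k _ (Qprop_transfer e.symm _ (Q_two_k p))
  have h3 : 2 * (p : ℕ) = 2 * (k : ℕ) := Nat.dvd_antisymm h1 h2
  have h4 : (k : ℕ) = (p : ℕ) := by omega
  exact h (PNat.coe_injective h4)
end

section
/- Let l be an odd positive integer, let q, r be positive real numbers, and let k be a positive integer. If L = (π/2)·lℤ × qℤ × rℤ × (qr/(2k))ℤ is a subgroup of the oscillator group G, then q = r. -/
open Real

/-- If `l` is an odd positive integer, `q, r > 0`, `k` a positive integer, and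
`L = (π/2)lℤ × qℤ × rℤ × (qr/(2k))ℤ` is a subgroup of the oscillator group, then `q = r`. -/
theorem statement12 (l : ℕ) (hodd : Odd l) (hl : 0 < l) (q r : ℝ) (hq : 0 < q) (hr : 0 < r)
    (k : ℕ+) (S : Subgroup Osc)
    (hS : (S : Set Osc) = prodSet (π / 2 * (l : ℝ)) q r (q * r / (2 * ((k : ℕ) : ℝ)))) :
    q = r := by
  obtain ⟨j, hj⟩ := hodd
  set p : ℝ := π / 2 * (l : ℝ) with hp
  have hpval : p = (j : ℝ) * π + π / 2 := by rw [hp, hj]; push_cast; ring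
  have hcos : cos p = 0 := by
    rw [hpval, cos_add, Real.cos_pi_div_two, Real.sin_pi_div_two]
    simp [Real.sin_int_mul_pi]
  have hsin : sin p ^ 2 = 1 := by
    have h := sin_sq_add_cos_sq p
    rw [hcos] at h
    nlinarith
  have ha : (⟨p, ⟨0, 0, 0⟩⟩ : Osc) ∈ S := by
    rw [← SetLike.mem_coe, hS]
    exact ⟨⟨1, by simp⟩, ⟨0, by simp⟩, ⟨0, by simp⟩, ⟨0, by simp⟩⟩
  have hb : (⟨0, ⟨q, 0, 0⟩⟩ : Osc) ∈ S := by
    rw [← SetLike.mem_coe, hS]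
    exact ⟨⟨0, by simp⟩, ⟨1, by simp⟩, ⟨0, by simp⟩, ⟨0, by simp⟩⟩
  have hc : (⟨0, ⟨0, r, 0⟩⟩ : Osc) ∈ S := by
    rw [← SetLike.mem_coe, hS]
    exact ⟨⟨0, by simp⟩, ⟨0, by simp⟩, ⟨1, by simp⟩, ⟨0, by simp⟩⟩
  have hab := S.mul_mem ha hb
  have hac := S.mul_mem ha hc
  rw [← SetLike.mem_coe, hS] at hab hac
  obtain ⟨-, -, ⟨n, hn⟩, -⟩ := hab
  obtain ⟨-, ⟨m, hm⟩, -, -⟩ := hac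
  simp only [Osc.mul_v, Osc.mul_t, Heis.mul_y, Heis.mul_x, alphaMap_y, alphaMap_x] at hn hm
  -- hn : 0 + (-q * sin p + 0 * cos p) = r * n
  -- hm : 0 + (0 * cos p + r * sin p) = q * m
  have hn' : q ^ 2 = r ^ 2 * (n : ℝ) ^ 2 := by
    linear_combination (-q * sin p + r * (n : ℝ)) * hn - q ^ 2 * hsin
  have hm' : r ^ 2 = q ^ 2 * (m : ℝ) ^ 2 := by
    linear_combination (r * sin p + q * (m : ℝ)) * hm - r ^ 2 * hsin
  have hnne : n ≠ 0 := by rintro rfl; simp at hn'; nlinarith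
  have hmne : m ≠ 0 := by rintro rfl; simp at hm'; nlinarith
  have hn1 : (1 : ℝ) ≤ (n : ℝ) ^ 2 := by
    have : (1 : ℤ) ≤ n ^ 2 := by rcases hnne.lt_or_gt with h | h <;> nlinarith
    exact_mod_cast this
  have hm1 : (1 : ℝ) ≤ (m : ℝ) ^ 2 := by
    have : (1 : ℤ) ≤ m ^ 2 := by rcases hmne.lt_or_gt with h | h <;> nlinarith
    exact_mod_cast this
  have hsq : q ^ 2 = r ^ 2 := by nlinarith
  nlinarith
end
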